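/- With the hypotheses of the previous setup (sin α = 2 t̄ M_W/M_H, cos α = √(1−sin²α), K as defined), the decay width Γ(H → hh)(M_H) = K² / (32 π M_H) · (1 − 4 M_h²/M_H²)^{1/2} satisfies Γ(H → hh)/M_H → g² t̄² / (32 π) as M_H → ∞. -/

import Mathlib

open Filter Real

/-- The ratio `Γ(H→hh)/M_H` tends to `g² t̄² / (32π)` in the heavy-singlet limit. -/
theorem Hhh_width_ratio_limit (g tbar MW Mh t₁ : ℝ)
    (hg : 0 < g) (ht : 0 < tbar) (hMW : 0 < MW) (hMh : 0 < Mh) (ht₁ : 0 < t₁) :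
    Filter.Tendsto
      (fun MH : ℝ =>
        ((g * (2 * tbar * MW / MH) * Real.sqrt (1 - (2 * tbar * MW / MH)^2) *
            (Mh^2 + MH^2 / 2) *
            (Real.sqrt (1 - (2 * tbar * MW / MH)^2) / MW +
              2 * Real.sqrt t₁ * (2 * tbar * MW / MH) / MH))^2 /
          (32 * Real.pi * MH) * Real.sqrt (1 - 4 * Mh^2 / MH^2)) / MH)
      Filter.atTop (nhds (g^2 * tbar^2 / (32 * Real.pi))) := by
  set F : ℝ → ℝ := fun u =>
    (g * Real.sqrt (1 - (2 * tbar * MW * u)^2) * (tbar * MW * (1 + 2 * Mh^2 * u^2)) *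
        (Real.sqrt (1 - (2 * tbar * MW * u)^2) / MW + 4 * Real.sqrt t₁ * tbar * MW * u^2))^2
      / (32 * Real.pi) * Real.sqrt (1 - 4 * Mh^2 * u^2) with hF
  have hcont : Continuous F := by
    apply Continuous.mul
    · apply Continuous.div_const
      fun_prop
    · fun_prop
  have hF0 : F 0 = g^2 * tbar^2 / (32 * Real.pi) := by
    simp only [hF]
    norm_num [Real.sqrt_one]
    field_simp
  have hlim : Filter.Tendsto (fun MH : ℝ => F MH⁻¹) Filter.atTop
      (nhds (g^2 * tbar^2 / (32 * Real.pi))) := by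
    rw [← hF0]
    exact (hcont.continuousAt.tendsto).comp tendsto_inv_atTop_zero
  refine hlim.congr' ?_
  filter_upwards [Filter.eventually_gt_atTop 0] with MH hM
  have hMne : MH ≠ 0 := ne_of_gt hM
  simp only [hF]
  have h1 : 2 * tbar * MW * MH⁻¹ = 2 * tbar * MW / MH := by rw [div_eq_mul_inv]
  have h2 : 1 - 4 * Mh^2 * (MH⁻¹)^2 = 1 - 4 * Mh^2 / MH^2 := by
    field_simp
  rw [h1, h2]
  field_simp
  ring
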